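/- (Fact: start with a selector) Every tiling of the plane by the constructed set B(T) of 29 Wang bars contains at least one placed bar belonging to the selector group. -/

import Mathlib

/-- A Wang tile: a quadruple (north, east, south, west) of colors (natural numbers). -/
abbrev WangTile : Type := ℕ × ℕ × ℕ × ℕ

def WangTile.north (t : WangTile) : ℕ := t.1
def WangTile.east  (t : WangTile) : ℕ := t.2.1
def WangTile.south (t : WangTile) : ℕ := t.2.2.1
def WangTile.west  (t : WangTile) : ℕ := t.2.2.2

/-- `f : ℤ × ℤ → WangTile` is a tiling of the plane by (translated copies of) tiles
of `T`: adjacent edges carry the same color. -/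
def IsWangTiling (T : Finset WangTile) (f : ℤ × ℤ → WangTile) : Prop :=
  (∀ p, f p ∈ T) ∧
  (∀ x y : ℤ, (f (x, y)).east = (f (x + 1, y)).west) ∧
  (∀ x y : ℤ, (f (x, y)).north = (f (x, y + 1)).south)

/-- The finite set `T` of Wang tiles tiles the plane. -/
def TilesPlane (T : Finset WangTile) : Prop := ∃ f, IsWangTiling T f

/-- A Wang bar: a list of top colors, a list of bottom colors (of the same positive
length `l`), a left color and a right color. -/
abbrev WangBar : Type := List ℕ × List ℕ × ℕ × ℕ

def WangBar.top    (b : WangBar) : List ℕ := b.1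
def WangBar.bottom (b : WangBar) : List ℕ := b.2.1
def WangBar.left   (b : WangBar) : ℕ := b.2.2.1
def WangBar.right  (b : WangBar) : ℕ := b.2.2.2

/-- The length of a Wang bar. -/
def WangBar.len (b : WangBar) : ℕ := b.1.length

/-- A genuine Wang bar has positive length and as many bottom colors as top colors. -/
def WangBar.IsValid (b : WangBar) : Prop := 0 < b.len ∧ b.top.length = b.bottom.length

/-- A tiling of the plane by translated copies of bars of `B`, recorded by the function
`f` sending each unit cell to the bar covering it together with the index of the cell
inside that bar.  The conditions say that the cells of one placed bar are consecutive
cells of one row, that colors of horizontally adjacent bars match at their common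
vertical unit segment, and that colors of vertically adjacent bars match at every
common horizontal unit segment. -/
def IsBarTiling (B : Finset WangBar) (f : ℤ × ℤ → WangBar × ℕ) : Prop :=
  (∀ p, (f p).1 ∈ B) ∧
  (∀ p, (f p).2 < (f p).1.len) ∧
  (∀ x y : ℤ, (f (x, y)).2 + 1 < (f (x, y)).1.len →
      f (x + 1, y) = ((f (x, y)).1, (f (x, y)).2 + 1)) ∧
  (∀ x y : ℤ, 0 < (f (x, y)).2 →
      f (x - 1, y) = ((f (x, y)).1, (f (x, y)).2 - 1)) ∧
  (∀ x y : ℤ, (f (x, y)).2 + 1 = (f (x, y)).1.len →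
      (f (x + 1, y)).2 = 0 ∧ (f (x, y)).1.right = (f (x + 1, y)).1.left) ∧
  (∀ x y : ℤ, (f (x, y)).1.top.getD (f (x, y)).2 0 =
      (f (x, y + 1)).1.bottom.getD (f (x, y + 1)).2 0)

/-- The finite set `B` of Wang bars tiles the plane. -/
def BarsTilePlane (B : Finset WangBar) : Prop := ∃ f, IsBarTiling B f

/-- The set of the (at most four) edge colors of a Wang tile. -/
def WangTile.colors (t : WangTile) : Finset ℕ := {t.north, t.east, t.south, t.west}

/-- The set of distinct colors occurring on the edges of tiles of `T`. -/
def tileSetColors (T : Finset WangTile) : Finset ℕ := T.biUnion WangTile.colors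

/-! ### The paper's construction of the set `B(T)` of 29 Wang bars
The construction uses the 20 new colors `a_1, …, a_8, b_1, …, b_8, x, y, z, 0`
together with six internal colors gluing the seven bars of the selector and the
internal colors `b_5, b_6, b_7, b_8` are among the `b`-colors. -/

def aCol (i : ℕ) : ℕ := i          -- the colors `a_1, …, a_8`
def bCol (i : ℕ) : ℕ := 8 + i      -- the colors `b_1, …, b_8`
def xCol : ℕ := 17                 -- the color `x`
def yCol : ℕ := 18                 -- the color `y`
def zCol : ℕ := 19                 -- the color `z`
def oCol : ℕ := 0                  -- the color `0`
def sCol (i : ℕ) : ℕ := 19 + i     -- the six internal colors of the selector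

/-- `n`: the number of tiles of `T`. -/
def nOf (T : Finset WangTile) : ℕ := T.card

/-- `m`: the number of distinct edge colors of `T`. -/
def mOf (T : Finset WangTile) : ℕ := (tileSetColors T).card

/-- The list of the `m` edge colors of `T`, in increasing order. -/
def colorList (T : Finset WangTile) : List ℕ := (tileSetColors T).sort (· ≤ ·)

/-- The unary index (position among the `m` colors of `T`) of an edge color. -/
def colorIdx (T : Finset WangTile) (c : ℕ) : ℕ := (colorList T).idxOf c

/-- Top side of an arm of an encoder section: all `m` cells carry `a_5` except the
single cell at position `pos`, which carries `a_3`. -/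
def armTop (m pos : ℕ) : List ℕ :=
  (List.range m).map fun i => if i = pos then aCol 3 else aCol 5

/-- Bottom side of an arm: all cells carry `a_6` except the cell at `pos` carrying `a_4`. -/
def armBot (m pos : ℕ) : List ℕ :=
  (List.range m).map fun i => if i = pos then aCol 4 else aCol 6

/-- Top side of the encoder section simulating the tile `t` (tilted by `π/4`):
left arm encoding the north color, the locator cell carrying `a_1`, and right arm
encoding the east color. -/
def sectionTop (T : Finset WangTile) (t : WangTile) : List ℕ :=
  armTop (mOf T) (colorIdx T t.north) ++ [aCol 1] ++ armTop (mOf T) (colorIdx T t.east)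

/-- Bottom side of the section simulating `t`: left arm encoding the west color,
the locator cell carrying `a_2`, and right arm encoding the south color. -/
def sectionBot (T : Finset WangTile) (t : WangTile) : List ℕ :=
  armBot (mOf T) (colorIdx T t.west) ++ [aCol 2] ++ armBot (mOf T) (colorIdx T t.south)

/-- (i) The encoder: one bar of length `n(2m+1)`, with one section of length `2m+1`
per tile of `T`, and left and right sides colored `z`. -/
noncomputable def encoderBar (T : Finset WangTile) : WangBar :=
  ((T.toList.map (sectionTop T)).flatten, (T.toList.map (sectionBot T)).flatten, zCol, zCol)

/-- (ii) The seven bars of the selector, glued by six distinct internal colors. -/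
def topPointer : WangBar := ([aCol 2], [sCol 1], oCol, oCol)
def selUpper2  : WangBar := ([sCol 1], [sCol 2], oCol, oCol)
def selUpper1  : WangBar := ([sCol 2], [sCol 3], xCol, yCol)
def selectorLong (T : Finset WangTile) : WangBar :=
  (List.replicate (mOf T) (aCol 7) ++ [sCol 3] ++ List.replicate (mOf T) (aCol 7),
   List.replicate (mOf T) (aCol 8) ++ [sCol 4] ++ List.replicate (mOf T) (aCol 8),
   zCol, zCol)
def selLower1  : WangBar := ([sCol 4], [sCol 5], xCol, yCol)
def selLower2  : WangBar := ([sCol 5], [sCol 6], oCol, oCol)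
def bottomPointer : WangBar := ([sCol 6], [aCol 1], oCol, oCol)

/-- The selector group. -/
def selectorBars (T : Finset WangTile) : Finset WangBar :=
  {topPointer, selUpper2, selUpper1, selectorLong T, selLower1, selLower2, bottomPointer}

/-- (iii) The aligner. -/
def alignerBar (T : Finset WangTile) : WangBar :=
  (List.replicate (2 * mOf T + 1) (aCol 5), List.replicate (2 * mOf T + 1) (aCol 6),
   zCol, zCol)

/-- The length `(n-1)(2m+1) + m + 1` of the two long linker bars. -/
def linkLen (T : Finset WangTile) : ℕ := (nOf T - 1) * (2 * mOf T + 1) + mOf T + 1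

/-- (iv) The linkers. -/
def linkA4B1 : WangBar := ([aCol 4], [bCol 1], oCol, oCol)
def linkB2A3 : WangBar := ([bCol 2], [aCol 3], oCol, oCol)
def longLinkA (T : Finset WangTile) : WangBar :=
  (bCol 1 :: List.replicate (linkLen T - 1) (bCol 3),
   List.replicate (linkLen T - 1) (bCol 4) ++ [bCol 2], yCol, xCol)
def longLinkB (T : Finset WangTile) : WangBar :=
  (List.replicate (linkLen T - 1) (bCol 3) ++ [bCol 1],
   bCol 2 :: List.replicate (linkLen T - 1) (bCol 4), yCol, xCol)

def linkerBars (T : Finset WangTile) : Finset WangBar :=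
  {linkA4B1, linkB2A3, longLinkA T, longLinkB T}

/-- (v) Group-1 fillers. -/
def group1Fillers : Finset WangBar :=
  { ([aCol 2], [bCol 3], oCol, oCol), ([aCol 4], [bCol 3], oCol, oCol),
    ([aCol 6], [bCol 3], oCol, oCol), ([aCol 8], [bCol 3], oCol, oCol),
    ([bCol 4], [aCol 1], oCol, oCol), ([bCol 4], [aCol 3], oCol, oCol),
    ([bCol 4], [aCol 5], oCol, oCol), ([bCol 4], [aCol 7], oCol, oCol) }

/-- (vi) Group-2 fillers. -/
def group2Fillers : Finset WangBar :=
  { ([aCol 8], [bCol 5], oCol, oCol), ([bCol 5], [bCol 6], xCol, xCol),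
    ([bCol 5], [bCol 6], yCol, yCol), ([bCol 6], [aCol 5], oCol, oCol),
    ([aCol 6], [bCol 7], oCol, oCol), ([bCol 7], [bCol 8], xCol, xCol),
    ([bCol 7], [bCol 8], yCol, yCol), ([bCol 8], [aCol 7], oCol, oCol) }

/-- The constructed set `B(T)` of 29 Wang bars. -/
noncomputable def barsOf (T : Finset WangTile) : Finset WangBar :=
  {encoderBar T} ∪ selectorBars T ∪ {alignerBar T} ∪ linkerBars T ∪
    group1Fillers ∪ group2Fillers

/-! ### Auxiliary lemmas for the proof of Fact 1 -/

lemma getD_or (l : List ℕ) (i : ℕ) : l.getD i 0 = 0 ∨ l.getD i 0 ∈ l := by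
  rcases Nat.lt_or_ge i l.length with h | h
  · right
    rw [List.getD_eq_getElem _ _ h]
    exact l.getElem_mem h
  · left
    exact List.getD_eq_default _ _ h

lemma mem_armTop {m pos c : ℕ} (h : c ∈ armTop m pos) : c = 3 ∨ c = 5 := by
  simp only [armTop, List.mem_map, List.mem_range, aCol] at h
  obtain ⟨i, -, hi⟩ := h
  split at hi <;> omega

lemma mem_armBot {m pos c : ℕ} (h : c ∈ armBot m pos) : c = 4 ∨ c = 6 := by
  simp only [armBot, List.mem_map, List.mem_range, aCol] at h
  obtain ⟨i, -, hi⟩ := h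
  split at hi <;> omega

lemma mem_encTop {T : Finset WangTile} {c : ℕ} (h : c ∈ (encoderBar T).top) :
    c = 1 ∨ c = 3 ∨ c = 5 := by
  simp only [encoderBar, WangBar.top, List.mem_flatten, List.mem_map] at h
  obtain ⟨l, ⟨t, -, rfl⟩, hc⟩ := h
  simp only [sectionTop, List.mem_append, List.mem_singleton, aCol] at hc
  rcases hc with (hc | hc) | hc
  · rcases mem_armTop hc with h | h <;> omega
  · omega
  · rcases mem_armTop hc with h | h <;> omega

lemma mem_encBot {T : Finset WangTile} {c : ℕ} (h : c ∈ (encoderBar T).bottom) :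
    c = 2 ∨ c = 4 ∨ c = 6 := by
  simp only [encoderBar, WangBar.bottom, List.mem_flatten, List.mem_map] at h
  obtain ⟨l, ⟨t, -, rfl⟩, hc⟩ := h
  simp only [sectionBot, List.mem_append, List.mem_singleton, aCol] at hc
  rcases hc with (hc | hc) | hc
  · rcases mem_armBot hc with h | h <;> omega
  · omega
  · rcases mem_armBot hc with h | h <;> omega

set_option maxHeartbeats 2000000

/-- **Fact 1 (start with a selector).**  Every tiling of the plane by the
constructed set `B(T)` of 29 Wang bars uses at least one bar of the selector
group. -/
theorem selector_must_be_used (T : Finset WangTile) (hT : T.Nonempty)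
    (f : ℤ × ℤ → WangBar × ℕ) (hf : IsBarTiling (barsOf T) f) :
    ∃ p : ℤ × ℤ, (f p).1 ∈ selectorBars T := by
  by_contra hno
  push_neg at hno
  obtain ⟨hmem, hidx, hstep, hstepl, hend, hvert⟩ := hf
  have hcase : ∀ p : ℤ × ℤ,
      (f p).1 = encoderBar T ∨
      (f p).1 = alignerBar T ∨
      (f p).1 = linkA4B1 ∨
      (f p).1 = linkB2A3 ∨
      (f p).1 = longLinkA T ∨
      (f p).1 = longLinkB T ∨
      (f p).1 = ([aCol 2], [bCol 3], oCol, oCol) ∨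
      (f p).1 = ([aCol 4], [bCol 3], oCol, oCol) ∨
      (f p).1 = ([aCol 6], [bCol 3], oCol, oCol) ∨
      (f p).1 = ([aCol 8], [bCol 3], oCol, oCol) ∨
      (f p).1 = ([bCol 4], [aCol 1], oCol, oCol) ∨
      (f p).1 = ([bCol 4], [aCol 3], oCol, oCol) ∨
      (f p).1 = ([bCol 4], [aCol 5], oCol, oCol) ∨
      (f p).1 = ([bCol 4], [aCol 7], oCol, oCol) ∨
      (f p).1 = ([aCol 8], [bCol 5], oCol, oCol) ∨
      (f p).1 = ([bCol 5], [bCol 6], xCol, xCol) ∨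
      (f p).1 = ([bCol 5], [bCol 6], yCol, yCol) ∨
      (f p).1 = ([bCol 6], [aCol 5], oCol, oCol) ∨
      (f p).1 = ([aCol 6], [bCol 7], oCol, oCol) ∨
      (f p).1 = ([bCol 7], [bCol 8], xCol, xCol) ∨
      (f p).1 = ([bCol 7], [bCol 8], yCol, yCol) ∨
      (f p).1 = ([bCol 8], [aCol 7], oCol, oCol) := by
    intro p
    have h1 := hmem p
    have h2 := hno p
    simp only [barsOf, Finset.mem_union] at h1
    rcases h1 with ((((h | h) | h) | h) | h) | h
    · rw [Finset.mem_singleton] at h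
      exact Or.inl h
    · exact absurd h h2
    · rw [Finset.mem_singleton] at h
      exact Or.inr (Or.inl h)
    · simp only [linkerBars, Finset.mem_insert, Finset.mem_singleton] at h
      rcases h with h | h | h | h
      · exact Or.inr (Or.inr (Or.inl h))
      · exact Or.inr (Or.inr (Or.inr (Or.inl h)))
      · exact Or.inr (Or.inr (Or.inr (Or.inr (Or.inl h))))
      · exact Or.inr (Or.inr (Or.inr (Or.inr (Or.inr (Or.inl h)))))
    · simp only [group1Fillers, Finset.mem_insert, Finset.mem_singleton] at h
      rcases h with h | h | h | h | h | h | h | h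
      · exact Or.inr (Or.inr (Or.inr (Or.inr (Or.inr (Or.inr (Or.inl h))))))
      · exact Or.inr (Or.inr (Or.inr (Or.inr (Or.inr (Or.inr (Or.inr (Or.inl h)))))))
      · exact Or.inr (Or.inr (Or.inr (Or.inr (Or.inr (Or.inr (Or.inr (Or.inr (Or.inl h))))))))
      · exact Or.inr (Or.inr (Or.inr (Or.inr (Or.inr (Or.inr (Or.inr (Or.inr (Or.inr (Or.inl h)))))))))
      · exact Or.inr (Or.inr (Or.inr (Or.inr (Or.inr (Or.inr (Or.inr (Or.inr (Or.inr (Or.inr (Or.inl h))))))))))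
      · exact Or.inr (Or.inr (Or.inr (Or.inr (Or.inr (Or.inr (Or.inr (Or.inr (Or.inr (Or.inr (Or.inr (Or.inl h)))))))))))
      · exact Or.inr (Or.inr (Or.inr (Or.inr (Or.inr (Or.inr (Or.inr (Or.inr (Or.inr (Or.inr (Or.inr (Or.inr (Or.inl h))))))))))))
      · exact Or.inr (Or.inr (Or.inr (Or.inr (Or.inr (Or.inr (Or.inr (Or.inr (Or.inr (Or.inr (Or.inr (Or.inr (Or.inr (Or.inl h)))))))))))))
    · simp only [group2Fillers, Finset.mem_insert, Finset.mem_singleton] at h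
      rcases h with h | h | h | h | h | h | h | h
      · exact Or.inr (Or.inr (Or.inr (Or.inr (Or.inr (Or.inr (Or.inr (Or.inr (Or.inr (Or.inr (Or.inr (Or.inr (Or.inr (Or.inr (Or.inl h))))))))))))))
      · exact Or.inr (Or.inr (Or.inr (Or.inr (Or.inr (Or.inr (Or.inr (Or.inr (Or.inr (Or.inr (Or.inr (Or.inr (Or.inr (Or.inr (Or.inr (Or.inl h)))))))))))))))
      · exact Or.inr (Or.inr (Or.inr (Or.inr (Or.inr (Or.inr (Or.inr (Or.inr (Or.inr (Or.inr (Or.inr (Or.inr (Or.inr (Or.inr (Or.inr (Or.inr (Or.inl h))))))))))))))))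
      · exact Or.inr (Or.inr (Or.inr (Or.inr (Or.inr (Or.inr (Or.inr (Or.inr (Or.inr (Or.inr (Or.inr (Or.inr (Or.inr (Or.inr (Or.inr (Or.inr (Or.inr (Or.inl h)))))))))))))))))
      · exact Or.inr (Or.inr (Or.inr (Or.inr (Or.inr (Or.inr (Or.inr (Or.inr (Or.inr (Or.inr (Or.inr (Or.inr (Or.inr (Or.inr (Or.inr (Or.inr (Or.inr (Or.inr (Or.inl h))))))))))))))))))
      · exact Or.inr (Or.inr (Or.inr (Or.inr (Or.inr (Or.inr (Or.inr (Or.inr (Or.inr (Or.inr (Or.inr (Or.inr (Or.inr (Or.inr (Or.inr (Or.inr (Or.inr (Or.inr (Or.inr (Or.inl h)))))))))))))))))))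
      · exact Or.inr (Or.inr (Or.inr (Or.inr (Or.inr (Or.inr (Or.inr (Or.inr (Or.inr (Or.inr (Or.inr (Or.inr (Or.inr (Or.inr (Or.inr (Or.inr (Or.inr (Or.inr (Or.inr (Or.inr (Or.inl h))))))))))))))))))))
      · exact Or.inr (Or.inr (Or.inr (Or.inr (Or.inr (Or.inr (Or.inr (Or.inr (Or.inr (Or.inr (Or.inr (Or.inr (Or.inr (Or.inr (Or.inr (Or.inr (Or.inr (Or.inr (Or.inr (Or.inr (Or.inr (h)))))))))))))))))))))
  have topAt_mem : ∀ p : ℤ × ℤ, (f p).1.top.getD (f p).2 0 ∈ (f p).1.top := by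
    intro p
    have h : (f p).2 < (f p).1.top.length := hidx p
    rw [List.getD_eq_getElem _ _ h]
    exact List.getElem_mem h
  have singTop : ∀ (x y : ℤ) (t b l r : ℕ), (f (x, y)).1 = ([t], [b], l, r) →
      (f (x, y + 1)).1.bottom.getD (f (x, y + 1)).2 0 = t := by
    intro x y t b l r hc
    have hv := hvert x y
    have hi := hidx (x, y)
    rw [hc] at hi hv
    have h0 : (f (x, y)).2 = 0 := by
      simpa [WangBar.len] using hi
    rw [h0] at hv
    simpa [WangBar.top] using hv.symm
  have singBot : ∀ (x y : ℤ) (t b l r : ℕ), (f (x, y)).1 = ([t], [b], l, r) →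
      (f (x, y - 1)).1.top.getD (f (x, y - 1)).2 0 = b := by
    intro x y t b l r hc
    have hv := hvert x (y - 1)
    rw [show y - 1 + 1 = y by ring] at hv
    have hi := hidx (x, y)
    rw [hc] at hi hv
    have h0 : (f (x, y)).2 = 0 := by
      simpa [WangBar.len] using hi
    rw [h0] at hv
    simpa [WangBar.bottom] using hv
  have noBot8 : ∀ p : ℤ × ℤ, (f p).1.bottom.getD (f p).2 0 ≠ 8 := by
    intro p hb
    have hor := getD_or (f p).1.bottom (f p).2
    rw [hb] at hor
    rcases hor with h0 | hm
    · omega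
    rcases hcase p with hc | hc | hc | hc | hc | hc | hc | hc | hc | hc | hc | hc | hc | hc | hc | hc | hc | hc | hc | hc | hc | hc <;> rw [hc] at hm
    all_goals first
      | (rcases mem_encBot hm with h | h | h <;> omega)
      | (simp [WangBar.bottom, alignerBar, linkA4B1, linkB2A3, longLinkA, longLinkB, aCol, bCol, oCol, xCol, yCol, zCol, List.mem_replicate] at hm)
  have noTop7 : ∀ p : ℤ × ℤ, (f p).1.top.getD (f p).2 0 ≠ 7 := by
    intro p hb
    have hm := topAt_mem p
    rw [hb] at hm
    rcases hcase p with hc | hc | hc | hc | hc | hc | hc | hc | hc | hc | hc | hc | hc | hc | hc | hc | hc | hc | hc | hc | hc | hc <;> rw [hc] at hm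
    all_goals first
      | (rcases mem_encTop hm with h | h | h <;> omega)
      | (simp [WangBar.top, alignerBar, linkA4B1, linkB2A3, longLinkA, longLinkB, aCol, bCol, oCol, xCol, yCol, zCol, List.mem_replicate] at hm)
  have ne_a8b5 : ∀ p : ℤ × ℤ, (f p).1 ≠ ([aCol 8], [bCol 5], oCol, oCol) := by
    rintro ⟨x, y⟩ hc
    exact noBot8 (x, y + 1) (singTop x y _ _ _ _ hc)
  have ne_a8b3 : ∀ p : ℤ × ℤ, (f p).1 ≠ ([aCol 8], [bCol 3], oCol, oCol) := by
    rintro ⟨x, y⟩ hc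
    exact noBot8 (x, y + 1) (singTop x y _ _ _ _ hc)
  have ne_b4a7 : ∀ p : ℤ × ℤ, (f p).1 ≠ ([bCol 4], [aCol 7], oCol, oCol) := by
    rintro ⟨x, y⟩ hc
    exact noTop7 (x, y - 1) (singBot x y _ _ _ _ hc)
  have ne_b8a7 : ∀ p : ℤ × ℤ, (f p).1 ≠ ([bCol 8], [aCol 7], oCol, oCol) := by
    rintro ⟨x, y⟩ hc
    exact noTop7 (x, y - 1) (singBot x y _ _ _ _ hc)
  have noBot13 : ∀ p : ℤ × ℤ, (f p).1.bottom.getD (f p).2 0 ≠ 13 := by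
    intro p hb
    have hor := getD_or (f p).1.bottom (f p).2
    rw [hb] at hor
    rcases hor with h0 | hm
    · omega
    rcases hcase p with hc | hc | hc | hc | hc | hc | hc | hc | hc | hc | hc | hc | hc | hc | hc | hc | hc | hc | hc | hc | hc | hc <;> rw [hc] at hm
    all_goals first
      | exact absurd hc (ne_a8b5 p)
      | (rcases mem_encBot hm with h | h | h <;> omega)
      | (simp [WangBar.bottom, alignerBar, linkA4B1, linkB2A3, longLinkA, longLinkB, aCol, bCol, oCol, xCol, yCol, zCol, List.mem_replicate] at hm)
  have ne_b5b6x : ∀ p : ℤ × ℤ, (f p).1 ≠ ([bCol 5], [bCol 6], xCol, xCol) := by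
    rintro ⟨x, y⟩ hc
    exact noBot13 (x, y + 1) (singTop x y _ _ _ _ hc)
  have ne_b5b6y : ∀ p : ℤ × ℤ, (f p).1 ≠ ([bCol 5], [bCol 6], yCol, yCol) := by
    rintro ⟨x, y⟩ hc
    exact noBot13 (x, y + 1) (singTop x y _ _ _ _ hc)
  have noBot14 : ∀ p : ℤ × ℤ, (f p).1.bottom.getD (f p).2 0 ≠ 14 := by
    intro p hb
    have hor := getD_or (f p).1.bottom (f p).2
    rw [hb] at hor
    rcases hor with h0 | hm
    · omega
    rcases hcase p with hc | hc | hc | hc | hc | hc | hc | hc | hc | hc | hc | hc | hc | hc | hc | hc | hc | hc | hc | hc | hc | hc <;> rw [hc] at hm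
    all_goals first
      | exact absurd hc (ne_b5b6x p)
      | exact absurd hc (ne_b5b6y p)
      | (rcases mem_encBot hm with h | h | h <;> omega)
      | (simp [WangBar.bottom, alignerBar, linkA4B1, linkB2A3, longLinkA, longLinkB, aCol, bCol, oCol, xCol, yCol, zCol, List.mem_replicate] at hm)
  have ne_b6a5 : ∀ p : ℤ × ℤ, (f p).1 ≠ ([bCol 6], [aCol 5], oCol, oCol) := by
    rintro ⟨x, y⟩ hc
    exact noBot14 (x, y + 1) (singTop x y _ _ _ _ hc)
  have noTop16 : ∀ p : ℤ × ℤ, (f p).1.top.getD (f p).2 0 ≠ 16 := by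
    intro p hb
    have hm := topAt_mem p
    rw [hb] at hm
    rcases hcase p with hc | hc | hc | hc | hc | hc | hc | hc | hc | hc | hc | hc | hc | hc | hc | hc | hc | hc | hc | hc | hc | hc <;> rw [hc] at hm
    all_goals first
      | exact absurd hc (ne_b8a7 p)
      | (rcases mem_encTop hm with h | h | h <;> omega)
      | (simp [WangBar.top, alignerBar, linkA4B1, linkB2A3, longLinkA, longLinkB, aCol, bCol, oCol, xCol, yCol, zCol, List.mem_replicate] at hm)
  have ne_b7b8x : ∀ p : ℤ × ℤ, (f p).1 ≠ ([bCol 7], [bCol 8], xCol, xCol) := by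
    rintro ⟨x, y⟩ hc
    exact noTop16 (x, y - 1) (singBot x y _ _ _ _ hc)
  have ne_b7b8y : ∀ p : ℤ × ℤ, (f p).1 ≠ ([bCol 7], [bCol 8], yCol, yCol) := by
    rintro ⟨x, y⟩ hc
    exact noTop16 (x, y - 1) (singBot x y _ _ _ _ hc)
  have noTop15 : ∀ p : ℤ × ℤ, (f p).1.top.getD (f p).2 0 ≠ 15 := by
    intro p hb
    have hm := topAt_mem p
    rw [hb] at hm
    rcases hcase p with hc | hc | hc | hc | hc | hc | hc | hc | hc | hc | hc | hc | hc | hc | hc | hc | hc | hc | hc | hc | hc | hc <;> rw [hc] at hm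
    all_goals first
      | exact absurd hc (ne_b7b8x p)
      | exact absurd hc (ne_b7b8y p)
      | (rcases mem_encTop hm with h | h | h <;> omega)
      | (simp [WangBar.top, alignerBar, linkA4B1, linkB2A3, longLinkA, longLinkB, aCol, bCol, oCol, xCol, yCol, zCol, List.mem_replicate] at hm)
  have ne_a6b7 : ∀ p : ℤ × ℤ, (f p).1 ≠ ([aCol 6], [bCol 7], oCol, oCol) := by
    rintro ⟨x, y⟩ hc
    exact noTop15 (x, y - 1) (singBot x y _ _ _ _ hc)
  have lastCell : ∀ (k : ℕ) (x y : ℤ), (f (x, y)).1.len = (f (x, y)).2 + 1 + k →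
      ∃ x' : ℤ, (f (x', y)).1 = (f (x, y)).1 ∧ (f (x', y)).2 + 1 = (f (x', y)).1.len := by
    intro k
    induction k with
    | zero => exact fun x y h => ⟨x, rfl, by omega⟩
    | succ k ih =>
      intro x y h
      have hs := hstep x y (by omega)
      have h1 : (f (x + 1, y)).1 = (f (x, y)).1 := by rw [hs]
      have h2 : (f (x + 1, y)).2 = (f (x, y)).2 + 1 := by rw [hs]
      obtain ⟨x', hx1, hx2⟩ := ih (x + 1) y (by rw [h1, h2]; omega)
      exact ⟨x', by rw [hx1, h1], hx2⟩
  have noLeft17 : ∀ p : ℤ × ℤ, (f p).1.left ≠ 17 := by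
    intro p hb
    rcases hcase p with hc | hc | hc | hc | hc | hc | hc | hc | hc | hc | hc | hc | hc | hc | hc | hc | hc | hc | hc | hc | hc | hc <;> rw [hc] at hb
    all_goals first
      | exact absurd hc (ne_b5b6x p)
      | exact absurd hc (ne_b7b8x p)
      | (simp [WangBar.left, encoderBar, alignerBar, linkA4B1, linkB2A3, longLinkA,
          longLinkB, aCol, bCol, oCol, xCol, yCol, zCol] at hb)
  have ne_longA : ∀ p : ℤ × ℤ, (f p).1 ≠ longLinkA T := by
    rintro ⟨x, y⟩ hc
    have hi := hidx (x, y)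
    obtain ⟨x', h1, h2⟩ := lastCell ((f (x, y)).1.len - (f (x, y)).2 - 1) x y (by omega)
    obtain ⟨-, hrt⟩ := hend x' y h2
    rw [h1, hc] at hrt
    exact noLeft17 (x' + 1, y) (by rw [← hrt]; rfl)
  have ne_longB : ∀ p : ℤ × ℤ, (f p).1 ≠ longLinkB T := by
    rintro ⟨x, y⟩ hc
    have hi := hidx (x, y)
    obtain ⟨x', h1, h2⟩ := lastCell ((f (x, y)).1.len - (f (x, y)).2 - 1) x y (by omega)
    obtain ⟨-, hrt⟩ := hend x' y h2
    rw [h1, hc] at hrt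
    exact noLeft17 (x' + 1, y) (by rw [← hrt]; rfl)
  have noBot12 : ∀ p : ℤ × ℤ, (f p).1.bottom.getD (f p).2 0 ≠ 12 := by
    intro p hb
    have hor := getD_or (f p).1.bottom (f p).2
    rw [hb] at hor
    rcases hor with h0 | hm
    · omega
    rcases hcase p with hc | hc | hc | hc | hc | hc | hc | hc | hc | hc | hc | hc | hc | hc | hc | hc | hc | hc | hc | hc | hc | hc <;> rw [hc] at hm
    all_goals first
      | exact absurd hc (ne_longA p)
      | exact absurd hc (ne_longB p)
      | (rcases mem_encBot hm with h | h | h <;> omega)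
      | (simp [WangBar.bottom, alignerBar, linkA4B1, linkB2A3, longLinkA, longLinkB, aCol, bCol, oCol, xCol, yCol, zCol, List.mem_replicate] at hm)
  have ne_b4a1 : ∀ p : ℤ × ℤ, (f p).1 ≠ ([bCol 4], [aCol 1], oCol, oCol) := by
    rintro ⟨x, y⟩ hc
    exact noBot12 (x, y + 1) (singTop x y _ _ _ _ hc)
  have ne_b4a3 : ∀ p : ℤ × ℤ, (f p).1 ≠ ([bCol 4], [aCol 3], oCol, oCol) := by
    rintro ⟨x, y⟩ hc
    exact noBot12 (x, y + 1) (singTop x y _ _ _ _ hc)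
  have ne_b4a5 : ∀ p : ℤ × ℤ, (f p).1 ≠ ([bCol 4], [aCol 5], oCol, oCol) := by
    rintro ⟨x, y⟩ hc
    exact noBot12 (x, y + 1) (singTop x y _ _ _ _ hc)
  have noTop11 : ∀ p : ℤ × ℤ, (f p).1.top.getD (f p).2 0 ≠ 11 := by
    intro p hb
    have hm := topAt_mem p
    rw [hb] at hm
    rcases hcase p with hc | hc | hc | hc | hc | hc | hc | hc | hc | hc | hc | hc | hc | hc | hc | hc | hc | hc | hc | hc | hc | hc <;> rw [hc] at hm
    all_goals first
      | exact absurd hc (ne_longA p)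
      | exact absurd hc (ne_longB p)
      | (rcases mem_encTop hm with h | h | h <;> omega)
      | (simp [WangBar.top, alignerBar, linkA4B1, linkB2A3, longLinkA, longLinkB, aCol, bCol, oCol, xCol, yCol, zCol, List.mem_replicate] at hm)
  have ne_a2b3 : ∀ p : ℤ × ℤ, (f p).1 ≠ ([aCol 2], [bCol 3], oCol, oCol) := by
    rintro ⟨x, y⟩ hc
    exact noTop11 (x, y - 1) (singBot x y _ _ _ _ hc)
  have ne_a4b3 : ∀ p : ℤ × ℤ, (f p).1 ≠ ([aCol 4], [bCol 3], oCol, oCol) := by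
    rintro ⟨x, y⟩ hc
    exact noTop11 (x, y - 1) (singBot x y _ _ _ _ hc)
  have ne_a6b3 : ∀ p : ℤ × ℤ, (f p).1 ≠ ([aCol 6], [bCol 3], oCol, oCol) := by
    rintro ⟨x, y⟩ hc
    exact noTop11 (x, y - 1) (singBot x y _ _ _ _ hc)
  have noTop9 : ∀ p : ℤ × ℤ, (f p).1.top.getD (f p).2 0 ≠ 9 := by
    intro p hb
    have hm := topAt_mem p
    rw [hb] at hm
    rcases hcase p with hc | hc | hc | hc | hc | hc | hc | hc | hc | hc | hc | hc | hc | hc | hc | hc | hc | hc | hc | hc | hc | hc <;> rw [hc] at hm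
    all_goals first
      | exact absurd hc (ne_longA p)
      | exact absurd hc (ne_longB p)
      | (rcases mem_encTop hm with h | h | h <;> omega)
      | (simp [WangBar.top, alignerBar, linkA4B1, linkB2A3, longLinkA, longLinkB, aCol, bCol, oCol, xCol, yCol, zCol, List.mem_replicate] at hm)
  have ne_linkA : ∀ p : ℤ × ℤ, (f p).1 ≠ linkA4B1 := by
    rintro ⟨x, y⟩ hc
    exact noTop9 (x, y - 1) (singBot x y _ _ _ _ hc)
  have noBot10 : ∀ p : ℤ × ℤ, (f p).1.bottom.getD (f p).2 0 ≠ 10 := by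
    intro p hb
    have hor := getD_or (f p).1.bottom (f p).2
    rw [hb] at hor
    rcases hor with h0 | hm
    · omega
    rcases hcase p with hc | hc | hc | hc | hc | hc | hc | hc | hc | hc | hc | hc | hc | hc | hc | hc | hc | hc | hc | hc | hc | hc <;> rw [hc] at hm
    all_goals first
      | exact absurd hc (ne_longA p)
      | exact absurd hc (ne_longB p)
      | (rcases mem_encBot hm with h | h | h <;> omega)
      | (simp [WangBar.bottom, alignerBar, linkA4B1, linkB2A3, longLinkA, longLinkB, aCol, bCol, oCol, xCol, yCol, zCol, List.mem_replicate] at hm)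
  have ne_linkB : ∀ p : ℤ × ℤ, (f p).1 ≠ linkB2A3 := by
    rintro ⟨x, y⟩ hc
    exact noBot10 (x, y + 1) (singTop x y _ _ _ _ hc)
  have noBot1 : ∀ p : ℤ × ℤ, (f p).1.bottom.getD (f p).2 0 ≠ 1 := by
    intro p hb
    have hor := getD_or (f p).1.bottom (f p).2
    rw [hb] at hor
    rcases hor with h0 | hm
    · omega
    rcases hcase p with hc | hc | hc | hc | hc | hc | hc | hc | hc | hc | hc | hc | hc | hc | hc | hc | hc | hc | hc | hc | hc | hc <;> rw [hc] at hm
    all_goals first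
      | exact absurd hc (ne_b4a1 p)
      | (rcases mem_encBot hm with h | h | h <;> omega)
      | (simp [WangBar.bottom, alignerBar, linkA4B1, linkB2A3, longLinkA, longLinkB, aCol, bCol, oCol, xCol, yCol, zCol, List.mem_replicate] at hm)
  have noBot3 : ∀ p : ℤ × ℤ, (f p).1.bottom.getD (f p).2 0 ≠ 3 := by
    intro p hb
    have hor := getD_or (f p).1.bottom (f p).2
    rw [hb] at hor
    rcases hor with h0 | hm
    · omega
    rcases hcase p with hc | hc | hc | hc | hc | hc | hc | hc | hc | hc | hc | hc | hc | hc | hc | hc | hc | hc | hc | hc | hc | hc <;> rw [hc] at hm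
    all_goals first
      | exact absurd hc (ne_linkB p)
      | exact absurd hc (ne_b4a3 p)
      | (rcases mem_encBot hm with h | h | h <;> omega)
      | (simp [WangBar.bottom, alignerBar, linkA4B1, linkB2A3, longLinkA, longLinkB, aCol, bCol, oCol, xCol, yCol, zCol, List.mem_replicate] at hm)
  have noBot5 : ∀ p : ℤ × ℤ, (f p).1.bottom.getD (f p).2 0 ≠ 5 := by
    intro p hb
    have hor := getD_or (f p).1.bottom (f p).2
    rw [hb] at hor
    rcases hor with h0 | hm
    · omega
    rcases hcase p with hc | hc | hc | hc | hc | hc | hc | hc | hc | hc | hc | hc | hc | hc | hc | hc | hc | hc | hc | hc | hc | hc <;> rw [hc] at hm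
    all_goals first
      | exact absurd hc (ne_b4a5 p)
      | exact absurd hc (ne_b6a5 p)
      | (rcases mem_encBot hm with h | h | h <;> omega)
      | (simp [WangBar.bottom, alignerBar, linkA4B1, linkB2A3, longLinkA, longLinkB, aCol, bCol, oCol, xCol, yCol, zCol, List.mem_replicate] at hm)
  have ne_enc : ∀ p : ℤ × ℤ, (f p).1 ≠ encoderBar T := by
    rintro ⟨x, y⟩ hc
    have hm := topAt_mem (x, y)
    have hv := hvert x y
    rw [hc] at hm hv
    rcases mem_encTop hm with h | h | h
    · exact noBot1 (x, y + 1) (by rw [← hv]; exact h)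
    · exact noBot3 (x, y + 1) (by rw [← hv]; exact h)
    · exact noBot5 (x, y + 1) (by rw [← hv]; exact h)
  have ne_align : ∀ p : ℤ × ℤ, (f p).1 ≠ alignerBar T := by
    rintro ⟨x, y⟩ hc
    have hm := topAt_mem (x, y)
    have hv := hvert x y
    rw [hc] at hm hv
    have htop : (alignerBar T).top = List.replicate (2 * mOf T + 1) 5 := rfl
    rw [htop] at hm hv
    have h5 := List.eq_of_mem_replicate hm
    exact noBot5 (x, y + 1) (by rw [← hv]; exact h5)
  rcases hcase (0, 0) with hc | hc | hc | hc | hc | hc | hc | hc | hc | hc | hc | hc | hc | hc | hc | hc | hc | hc | hc | hc | hc | hc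
  · exact ne_enc _ hc
  · exact ne_align _ hc
  · exact ne_linkA _ hc
  · exact ne_linkB _ hc
  · exact ne_longA _ hc
  · exact ne_longB _ hc
  · exact ne_a2b3 _ hc
  · exact ne_a4b3 _ hc
  · exact ne_a6b3 _ hc
  · exact ne_a8b3 _ hc
  · exact ne_b4a1 _ hc
  · exact ne_b4a3 _ hc
  · exact ne_b4a5 _ hc
  · exact ne_b4a7 _ hc
  · exact ne_a8b5 _ hc
  · exact ne_b5b6x _ hc
  · exact ne_b5b6y _ hc
  · exact ne_b6a5 _ hc
  · exact ne_a6b7 _ hc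
  · exact ne_b7b8x _ hc
  · exact ne_b7b8y _ hc
  · exact ne_b8a7 _ hc
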